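/- arXiv:2206.08793 — 3 statements merged into one kernel-verified Lean document; each statement's English description precedes it below -/
import Mathlib

section
/- Let U_k ∈ ℝ^{n×k} have orthonormal columns with orthogonal complement basis Ū_k ∈ ℝ^{n×(n−k)} (so U_kU_kᵀ + Ū_kŪ_kᵀ = I_n). Let Z ∈ ℝ^{n×p} be full column rank, set Ω_k = U_kᵀZ and Ω̄_k = Ū_kᵀZ, and assume Ω_k has full row rank k. Then with T_k = Ω̄_k Ω_k⁺ and S_k = (I_{n−k} + T_kT_kᵀ)^{−1/2} T_k, one has U_kᵀ[I_n − π(Z)]U_k ⪯ S_kᵀS_k ⪯ T_kᵀT_k in the Loewner order. -/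
open Matrix

noncomputable def proj {n p : ℕ} (Z : Matrix (Fin n) (Fin p) ℝ) : Matrix (Fin n) (Fin n) ℝ :=
  Z * (Zᵀ * Z)⁻¹ * Zᵀ

noncomputable def pinvRow {k p : ℕ} (Ω : Matrix (Fin k) (Fin p) ℝ) : Matrix (Fin p) (Fin k) ℝ :=
  Ωᵀ * (Ω * Ωᵀ)⁻¹

lemma onePlusMulSelfT_psd {l k : ℕ} (T : Matrix (Fin l) (Fin k) ℝ) :
    ((1 : Matrix (Fin l) (Fin l) ℝ) + T * Tᵀ).PosSemidef := by
  have h2 : (T * Tᵀ).PosSemidef := by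
    simpa [Matrix.conjTranspose_eq_transpose_of_trivial] using Matrix.posSemidef_self_mul_conjTranspose T
  exact Matrix.PosSemidef.one.add h2

/-- The positive semidefinite square root, as `Matrix.PosSemidef.sqrt` was defined in Mathlib
(Dec 2024); it has since been removed. -/
noncomputable def Matrix.PosSemidef.sqrt {n : Type*} [Fintype n] [DecidableEq n]
    {A : Matrix n n ℝ} (hA : A.PosSemidef) : Matrix n n ℝ :=
  hA.1.eigenvectorUnitary.1 * diagonal ((√·) ∘ hA.1.eigenvalues) *
    (star hA.1.eigenvectorUnitary : Matrix n n ℝ)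

/-- The "sine" matrix `S = (I + TTᵀ)^{-1/2} T`. -/
noncomputable def sineMat {l k : ℕ} (T : Matrix (Fin l) (Fin k) ℝ) : Matrix (Fin l) (Fin k) ℝ :=
  ((onePlusMulSelfT_psd T).sqrt)⁻¹ * T


lemma Matrix.PosSemidef.sqrt_mul_self {n : Type*} [Fintype n] [DecidableEq n]
    {A : Matrix n n ℝ} (hA : A.PosSemidef) : hA.sqrt * hA.sqrt = A := by
  have hU : (star hA.1.eigenvectorUnitary : Matrix n n ℝ) * hA.1.eigenvectorUnitary.1 = 1 :=
    Unitary.star_mul_self_of_mem hA.1.eigenvectorUnitary.2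
  have hD : diagonal ((√·) ∘ hA.1.eigenvalues) * diagonal ((√·) ∘ hA.1.eigenvalues)
      = diagonal hA.1.eigenvalues := by
    rw [diagonal_mul_diagonal]; congr 1; funext i
    exact Real.mul_self_sqrt (hA.eigenvalues_nonneg i)
  unfold Matrix.PosSemidef.sqrt
  calc _ = hA.1.eigenvectorUnitary.1 * (diagonal ((√·) ∘ hA.1.eigenvalues) *
        ((star hA.1.eigenvectorUnitary : Matrix n n ℝ) * hA.1.eigenvectorUnitary.1) *
        diagonal ((√·) ∘ hA.1.eigenvalues)) * (star hA.1.eigenvectorUnitary : Matrix n n ℝ) := by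
          simp only [Matrix.mul_assoc]
    _ = A := by
      rw [hU, Matrix.mul_one, hD]
      conv_rhs => rw [hA.1.spectral_theorem, Unitary.conjStarAlgAut_apply]
      simp

lemma Matrix.PosSemidef.transpose_sqrt {n : Type*} [Fintype n] [DecidableEq n]
    {A : Matrix n n ℝ} (hA : A.PosSemidef) : (hA.sqrt)ᵀ = hA.sqrt := by
  unfold Matrix.PosSemidef.sqrt
  simp [Matrix.star_eq_conjTranspose, Matrix.conjTranspose_eq_transpose_of_trivial,
    Matrix.transpose_mul, Matrix.mul_assoc]

lemma isUnit_of_rank_eq_card {p : ℕ} (B : Matrix (Fin p) (Fin p) ℝ) (h : B.rank = p) :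
    IsUnit B := by
  rw [← Matrix.mulVec_injective_iff_isUnit]
  have hr : LinearMap.range B.mulVecLin = ⊤ := by
    apply Submodule.eq_top_of_finrank_eq
    simpa [Matrix.rank] using h
  have hs : Function.Surjective B.mulVecLin := LinearMap.range_eq_top.mp hr
  have hi := LinearMap.injective_iff_surjective.mpr hs
  simpa [Matrix.mulVecLin, Function.Injective] using hi

lemma psdMM {a b : ℕ} (M : Matrix (Fin a) (Fin b) ℝ) : (M * Mᵀ).PosSemidef := by
  simpa [Matrix.conjTranspose_eq_transpose_of_trivial] using Matrix.posSemidef_self_mul_conjTranspose M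

/-- Lemma 1 of the paper: `Uₖᵀ (I − π(Z)) Uₖ ⪯ SₖᵀSₖ ⪯ TₖᵀTₖ`. -/
theorem sine_bound {n k p : ℕ}
    (Uk : Matrix (Fin n) (Fin k) ℝ) (Ubar : Matrix (Fin n) (Fin (n - k)) ℝ)
    (hUk : Ukᵀ * Uk = 1) (hUbar : Ubarᵀ * Ubar = 1)
    (hfull : Uk * Ukᵀ + Ubar * Ubarᵀ = 1)
    (Z : Matrix (Fin n) (Fin p) ℝ) (hZ : Z.rank = p)
    (hΩ : (Ukᵀ * Z).rank = k) :
    ((sineMat ((Ubarᵀ * Z) * pinvRow (Ukᵀ * Z)))ᵀ * sineMat ((Ubarᵀ * Z) * pinvRow (Ukᵀ * Z)) -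
        Ukᵀ * ((1 : Matrix (Fin n) (Fin n) ℝ) - proj Z) * Uk).PosSemidef ∧
      (((Ubarᵀ * Z) * pinvRow (Ukᵀ * Z))ᵀ * ((Ubarᵀ * Z) * pinvRow (Ukᵀ * Z)) -
        (sineMat ((Ubarᵀ * Z) * pinvRow (Ukᵀ * Z)))ᵀ *
          sineMat ((Ubarᵀ * Z) * pinvRow (Ukᵀ * Z))).PosSemidef := by
  classical
  -- invertibility of ZᵀZ and ΩΩᵀ
  have hGu : IsUnit ((Zᵀ * Z).det) := by
    have h : (Zᵀ * Z).rank = p := by rw [Matrix.rank_transpose_mul_self, hZ]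
    exact (Matrix.isUnit_iff_isUnit_det _).mp (isUnit_of_rank_eq_card _ h)
  have hWu : IsUnit (((Ukᵀ * Z) * (Ukᵀ * Z)ᵀ).det) := by
    have h : ((Ukᵀ * Z) * (Ukᵀ * Z)ᵀ).rank = k := by
      rw [Matrix.rank_self_mul_transpose, hΩ]
    exact (Matrix.isUnit_iff_isUnit_det _).mp (isUnit_of_rank_eq_card _ h)
  set Ω : Matrix (Fin k) (Fin p) ℝ := Ukᵀ * Z with hΩdef
  set Ob : Matrix (Fin (n - k)) (Fin p) ℝ := Ubarᵀ * Z with hObdef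
  set Pv : Matrix (Fin p) (Fin k) ℝ := pinvRow Ω with hPvdef
  set T : Matrix (Fin (n - k)) (Fin k) ℝ := Ob * Pv with hTdef
  set G : Matrix (Fin p) (Fin p) ℝ := Zᵀ * Z with hGdef
  -- basic units / inverses
  have hGinv : G * G⁻¹ = 1 := Matrix.mul_nonsing_inv _ hGu
  have hGinv' : G⁻¹ * G = 1 := Matrix.nonsing_inv_mul _ hGu
  have hΩPv : Ω * Pv = 1 := by
    rw [hPvdef]; unfold pinvRow
    rw [← Matrix.mul_assoc]
    exact Matrix.mul_nonsing_inv _ hWu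
  have hPvΩt : Pvᵀ * Ωᵀ = 1 := by
    rw [← Matrix.transpose_mul, hΩPv, Matrix.transpose_one]
  have hTt : Tᵀ = Pvᵀ * Obᵀ := by rw [hTdef, Matrix.transpose_mul]
  -- cancellation toolkit
  have cG1 : ∀ {q : ℕ} (X : Matrix (Fin p) (Fin q) ℝ), Zᵀ * (Z * X) = G * X := by
    intro q X; rw [← Matrix.mul_assoc, ← hGdef]
  have cG2 : ∀ {q : ℕ} (X : Matrix (Fin p) (Fin q) ℝ), G⁻¹ * (G * X) = X := by
    intro q X; rw [← Matrix.mul_assoc, hGinv', Matrix.one_mul]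
  have hGt : Gᵀ = G := by rw [hGdef]; simp [Matrix.transpose_mul]
  -- split of G
  have hGsplit : Ωᵀ * Ω + Obᵀ * Ob = G := by
    have h : Ωᵀ * Ω + Obᵀ * Ob = Zᵀ * ((Uk * Ukᵀ + Ubar * Ubarᵀ) * Z) := by
      rw [hΩdef, hObdef]
      simp [Matrix.transpose_mul, Matrix.add_mul, Matrix.mul_add, Matrix.mul_assoc]
    rw [h, hfull, Matrix.one_mul, ← hGdef]
  -- the matrices A = 1 + TᵀT and B = 1 + TTᵀ
  set A : Matrix (Fin k) (Fin k) ℝ := 1 + Tᵀ * T with hAdef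
  set B : Matrix (Fin (n - k)) (Fin (n - k)) ℝ := 1 + T * Tᵀ with hBdef
  have hApd : A.PosDef := by
    have h2 : (Tᵀ * T).PosSemidef := by
      simpa [Matrix.conjTranspose_eq_transpose_of_trivial] using Matrix.posSemidef_self_mul_conjTranspose Tᵀ
    rw [hAdef]
    exact Matrix.PosDef.add_posSemidef Matrix.PosDef.one h2
  have hBpd : B.PosDef := by
    have h2 : (T * Tᵀ).PosSemidef := by
      simpa [Matrix.conjTranspose_eq_transpose_of_trivial] using Matrix.posSemidef_self_mul_conjTranspose T
    rw [hBdef]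
    exact Matrix.PosDef.add_posSemidef Matrix.PosDef.one h2
  have hAu : IsUnit A.det := (Matrix.isUnit_iff_isUnit_det _).mp hApd.isUnit
  have hBu : IsUnit B.det := (Matrix.isUnit_iff_isUnit_det _).mp hBpd.isUnit
  have hAinv : A * A⁻¹ = 1 := Matrix.mul_nonsing_inv _ hAu
  have hAinv' : A⁻¹ * A = 1 := Matrix.nonsing_inv_mul _ hAu
  have hBinv : B * B⁻¹ = 1 := Matrix.mul_nonsing_inv _ hBu
  have hAt : Aᵀ = A := by
    rw [hAdef]; simp [Matrix.transpose_add, Matrix.transpose_mul]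
  -- the square root H and its inverse R
  set H : Matrix (Fin (n - k)) (Fin (n - k)) ℝ := (onePlusMulSelfT_psd T).sqrt with hHdef
  set R : Matrix (Fin (n - k)) (Fin (n - k)) ℝ := H⁻¹ with hRdef
  have hSdef : sineMat T = R * T := by rw [hRdef, hHdef]; rfl
  have hHH : H * H = B := by rw [hBdef, hHdef]; exact (onePlusMulSelfT_psd T).sqrt_mul_self
  have hHu : IsUnit H.det := by
    have h : IsUnit ((H * H).det) := by rw [hHH]; exact hBu
    rw [Matrix.det_mul] at h
    exact isUnit_of_mul_isUnit_left h
  have hHt : Hᵀ = H := by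
    rw [hHdef]
    exact (onePlusMulSelfT_psd T).transpose_sqrt
  have hRt : Rᵀ = R := by rw [hRdef, Matrix.transpose_nonsing_inv, hHt]
  have hRH : R * H = 1 := by rw [hRdef]; exact Matrix.nonsing_inv_mul _ hHu
  have hHR : H * R = 1 := by rw [hRdef]; exact Matrix.mul_nonsing_inv _ hHu
  have hRR : R * R = B⁻¹ := by
    have h : B⁻¹ = H⁻¹ * H⁻¹ := by rw [← hHH, Matrix.mul_inv_rev]
    rw [hRdef, h]
  -- SᵀS = Tᵀ B⁻¹ T
  have hSS : (sineMat T)ᵀ * sineMat T = Tᵀ * B⁻¹ * T := by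
    rw [hSdef, ← hRR]
    simp [Matrix.transpose_mul, hRt, Matrix.mul_assoc]
  -- push-through: Tᵀ B⁻¹ T = 1 - A⁻¹
  have hcomm : A * Tᵀ = Tᵀ * B := by
    rw [hAdef, hBdef]
    simp [Matrix.add_mul, Matrix.mul_add, Matrix.mul_assoc]
  have hpush : Tᵀ * B⁻¹ * T = 1 - A⁻¹ := by
    have hL : A * (Tᵀ * B⁻¹ * T) = Tᵀ * T := by
      have h1 : A * (Tᵀ * B⁻¹ * T) = (A * Tᵀ) * B⁻¹ * T := by
        simp [Matrix.mul_assoc]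
      rw [h1, hcomm, Matrix.mul_assoc Tᵀ B B⁻¹, hBinv, Matrix.mul_one]
    have hRHS : A * (1 - A⁻¹) = Tᵀ * T := by
      rw [Matrix.mul_sub, Matrix.mul_one, hAinv, hAdef]
      abel
    have h2 : A * (Tᵀ * B⁻¹ * T) = A * (1 - A⁻¹) := hL.trans hRHS.symm
    have h3 := congrArg (fun X => A⁻¹ * X) h2
    simpa [← Matrix.mul_assoc, hAinv', Matrix.one_mul] using h3
  have hSSA : (sineMat T)ᵀ * sineMat T = 1 - A⁻¹ := hSS.trans hpush
  -- ===== Part 2 =====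
  have hBR : R * B * R = 1 := by
    rw [← hHH]
    have h1 : R * (H * H) * R = (R * H) * (H * R) := by simp [Matrix.mul_assoc]
    rw [h1, hRH, hHR, Matrix.one_mul]
  have h1RR : (1 : Matrix (Fin (n - k)) (Fin (n - k)) ℝ) - R * R = R * (T * Tᵀ) * R := by
    have hexp : R * B * R = R * R + R * (T * Tᵀ) * R := by
      rw [hBdef]; simp [Matrix.mul_add, Matrix.add_mul, Matrix.mul_one]
    rw [← hBR, hexp]; abel
  have part2 : (Tᵀ * T - (sineMat T)ᵀ * sineMat T).PosSemidef := by
    have hE2 : Tᵀ * T - (sineMat T)ᵀ * sineMat T = (Tᵀ * R * T) * (Tᵀ * R * T)ᵀ := by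
      rw [hSS, ← hRR]
      have h2 : Tᵀ * T - Tᵀ * (R * R) * T
          = Tᵀ * ((1 : Matrix (Fin (n - k)) (Fin (n - k)) ℝ) - R * R) * T := by
        simp [Matrix.mul_sub, Matrix.sub_mul, Matrix.mul_one]
      rw [h2, h1RR]
      simp [Matrix.transpose_mul, hRt, Matrix.transpose_transpose, Matrix.mul_assoc]
    rw [hE2]
    exact psdMM _
  -- ===== Part 1 =====
  set Zh : Matrix (Fin n) (Fin k) ℝ := Z * Pv with hZhdef
  have hUZh : Ukᵀ * Zh = 1 := by
    rw [hZhdef, ← Matrix.mul_assoc, ← hΩdef, hΩPv]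
  have hZhU : Zhᵀ * Uk = 1 := by
    have h := congrArg Matrix.transpose hUZh
    rwa [Matrix.transpose_mul, Matrix.transpose_transpose, Matrix.transpose_one] at h
  have cUZh : ∀ {q : ℕ} (X : Matrix (Fin k) (Fin q) ℝ), Ukᵀ * (Zh * X) = X := by
    intro q X; rw [← Matrix.mul_assoc, hUZh, Matrix.one_mul]
  have hZhZh : Zhᵀ * Zh = A := by
    rw [hZhdef, hAdef]
    calc (Z * Pv)ᵀ * (Z * Pv) = Pvᵀ * (G * Pv) := by
          simp [Matrix.transpose_mul, Matrix.mul_assoc, cG1]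
      _ = Pvᵀ * (Ωᵀ * (Ω * Pv)) + Pvᵀ * (Obᵀ * (Ob * Pv)) := by
          rw [← hGsplit]; simp [Matrix.add_mul, Matrix.mul_add, Matrix.mul_assoc]
      _ = 1 + Tᵀ * T := by
          rw [hΩPv, Matrix.mul_one, hPvΩt, ← hTdef, ← Matrix.mul_assoc, ← hTt]
  have cZhZh : ∀ {q : ℕ} (X : Matrix (Fin k) (Fin q) ℝ), Zhᵀ * (Zh * X) = A * X := by
    intro q X; rw [← Matrix.mul_assoc, hZhZh]
  -- projections
  set Pi : Matrix (Fin n) (Fin n) ℝ := proj Z with hPidef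
  have hPieq : Pi = Z * G⁻¹ * Zᵀ := by rw [hPidef, hGdef]; rfl
  set Q : Matrix (Fin n) (Fin n) ℝ := Zh * A⁻¹ * Zhᵀ with hQdef
  have hPit : Piᵀ = Pi := by
    rw [hPieq]
    simp [Matrix.transpose_mul, Matrix.transpose_nonsing_inv, hGt, Matrix.mul_assoc]
  have hQt : Qᵀ = Q := by
    rw [hQdef]
    simp [Matrix.transpose_mul, Matrix.transpose_nonsing_inv, hAt, Matrix.mul_assoc]
  have hPiPi : Pi * Pi = Pi := by
    rw [hPieq]
    simp only [Matrix.mul_assoc, cG1, cG2]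
  have hPiZh : Pi * Zh = Zh := by
    rw [hPieq, hZhdef]
    simp only [Matrix.mul_assoc, cG1, cG2]
  have cPiZh : ∀ {q : ℕ} (X : Matrix (Fin k) (Fin q) ℝ), Pi * (Zh * X) = Zh * X := by
    intro q X; rw [← Matrix.mul_assoc, hPiZh]
  have hPiQ : Pi * Q = Q := by
    rw [hQdef]
    simp only [Matrix.mul_assoc, cPiZh]
  have hQPi : Q * Pi = Q := by
    have h := congrArg Matrix.transpose hPiQ
    rwa [Matrix.transpose_mul, hQt, hPit] at h
  have hQQ : Q * Q = Q := by
    rw [hQdef]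
    simp only [Matrix.mul_assoc, cZhZh]
    rw [← Matrix.mul_assoc A⁻¹ A, hAinv', Matrix.one_mul]
  have hUQU : Ukᵀ * Q * Uk = A⁻¹ := by
    rw [hQdef]
    simp only [Matrix.mul_assoc, cUZh]
    rw [hZhU, Matrix.mul_one]
  have hIdemQ : ((1 : Matrix (Fin n) (Fin n) ℝ) - Q) * (1 - Q) = 1 - Q := by
    rw [Matrix.sub_mul, Matrix.one_mul, Matrix.mul_sub, Matrix.mul_one, hQQ]
    abel
  have hUPiU : Ukᵀ * ((1 : Matrix (Fin n) (Fin n) ℝ) - Pi) * Uk = 1 - Ukᵀ * Pi * Uk := by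
    rw [Matrix.mul_sub, Matrix.mul_one, Matrix.sub_mul, hUk]
  -- the PSD witness for part 1
  set M : Matrix (Fin k) (Fin n) ℝ := Ukᵀ * (Pi * (1 - Q)) with hMdef
  have hMt : Mᵀ = (1 - Q) * (Pi * Uk) := by
    rw [hMdef]
    simp [Matrix.transpose_mul, Matrix.transpose_sub, Matrix.transpose_one, hQt, hPit,
      Matrix.transpose_transpose, Matrix.mul_assoc]
  have hPQ : Pi * (1 - Q) * Pi = Pi - Q := by
    rw [Matrix.mul_sub, Matrix.mul_one, Matrix.sub_mul, hPiPi, hPiQ, hQPi]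
  have hMM : M * Mᵀ = Ukᵀ * (Pi - Q) * Uk := by
    rw [hMdef, hMt]
    have h1 : Ukᵀ * (Pi * (1 - Q)) * ((1 - Q) * (Pi * Uk))
        = Ukᵀ * ((Pi * ((1 - Q) * (1 - Q)) * Pi) * Uk) := by
      simp [Matrix.mul_assoc]
    rw [h1, hIdemQ, hPQ, ← Matrix.mul_assoc]
  have part1 : ((sineMat T)ᵀ * sineMat T - Ukᵀ * ((1 : Matrix (Fin n) (Fin n) ℝ) - Pi) * Uk).PosSemidef := by
    have hE1 : (sineMat T)ᵀ * sineMat T - Ukᵀ * ((1 : Matrix (Fin n) (Fin n) ℝ) - Pi) * Uk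
        = M * Mᵀ := by
      rw [hSSA, hUPiU, hMM]
      have h2 : Ukᵀ * (Pi - Q) * Uk = Ukᵀ * Pi * Uk - Ukᵀ * Q * Uk := by
        rw [Matrix.mul_sub, Matrix.sub_mul]
      rw [h2, hUQU]
      abel
    rw [hE1]
    exact psdMM _
  exact ⟨part1, part2⟩
end

section
/- Let A ∈ ℝ^{n×m} with σ₁ ≥ … ≥ σ_m its singular values, SVD blocks U_k, Ū_k, Σ_k, Σ̄_k. Then AAᵀ ⪯ U_k Σ̂_k² U_kᵀ + σ_{k+1}² I_n in the Loewner order, where Σ̂_k² = Σ_k² − σ_{k+1}² I_k. -/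
open Matrix

/-- Key matrix inequality in the proof of Theorem 2:
`AAᵀ ⪯ U_k Σ̂_k² U_kᵀ + σ_{k+1}² I_n` where `Σ̂_k² = Σ_k² − σ_{k+1}² I_k`. -/
theorem key_loewner_bound {n m k : ℕ}
    (A : Matrix (Fin n) (Fin m) ℝ)
    (Uk : Matrix (Fin n) (Fin k) ℝ) (Ubar : Matrix (Fin n) (Fin (n - k)) ℝ)
    (σ : Fin k → ℝ) (Sigb : Matrix (Fin (n - k)) (Fin (m - k)) ℝ) (σk1 : ℝ)
    (hUk : Ukᵀ * Uk = 1)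
    (hUfull : Uk * Ukᵀ + Ubar * Ubarᵀ = 1)
    (hAAT : A * Aᵀ =
      Uk * Matrix.diagonal (fun i => σ i ^ 2) * Ukᵀ + Ubar * (Sigb * Sigbᵀ) * Ubarᵀ)
    (hSigb : ((σk1 ^ 2) • (1 : Matrix (Fin (n - k)) (Fin (n - k)) ℝ) - Sigb * Sigbᵀ).PosSemidef) :
    (Uk * Matrix.diagonal (fun i => σ i ^ 2 - σk1 ^ 2) * Ukᵀ +
        (σk1 ^ 2) • (1 : Matrix (Fin n) (Fin n) ℝ) - A * Aᵀ).PosSemidef := by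
  have hdiag : Matrix.diagonal (fun i => σ i ^ 2 - σk1 ^ 2) =
      Matrix.diagonal (fun i => σ i ^ 2) - (σk1 ^ 2) • (1 : Matrix (Fin k) (Fin k) ℝ) := by
    rw [← Matrix.diagonal_sub]
    congr 1
    funext i
    simp [Matrix.smul_eq_diagonal_mul]
  have key : Uk * Matrix.diagonal (fun i => σ i ^ 2 - σk1 ^ 2) * Ukᵀ +
        (σk1 ^ 2) • (1 : Matrix (Fin n) (Fin n) ℝ) - A * Aᵀ =
      Ubar * ((σk1 ^ 2) • (1 : Matrix (Fin (n - k)) (Fin (n - k)) ℝ) - Sigb * Sigbᵀ) * Ubarᵀ := by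
    rw [hAAT, hdiag, ← hUfull]
    simp only [Matrix.mul_sub, Matrix.sub_mul, Matrix.mul_smul, Matrix.smul_mul,
      Matrix.mul_one, smul_add, Matrix.mul_assoc]
    abel
  rw [key]
  have := hSigb.mul_mul_conjTranspose_same Ubar
  simpa [Matrix.conjTranspose_eq_transpose_of_trivial] using this
end

section
/- Let Z ∈ ℝ^{n×p} and Ẑ ∈ ℝ^{n×p} with both Z and W = Z − Ẑ full column rank. Then for any A_k ∈ ℝ^{n×m}: ‖[I_n − π(Z)]A_k‖_{2,F} ≤ ‖[I_n − π(W)]A_k‖_{2,F} + ‖Ẑ‖₂ ‖W⁺‖₂ ‖A_k‖_{2,F}, where π(M) = MM⁺ and the subscript 2,F means the inequality holds in both the spectral and Frobenius norms. -/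
open Matrix

noncomputable def specNorm {m n : ℕ} (M : Matrix (Fin m) (Fin n) ℝ) : ℝ :=
  ‖LinearMap.toContinuousLinearMap (Matrix.toEuclideanLin M)‖

noncomputable def froNorm {m n : ℕ} (M : Matrix (Fin m) (Fin n) ℝ) : ℝ :=
  Real.sqrt (∑ i, ∑ j, (M i j)^2)

/-- Moore–Penrose inverse of a full column rank matrix. -/
noncomputable def pinvCol {n p : ℕ} (W : Matrix (Fin n) (Fin p) ℝ) : Matrix (Fin p) (Fin n) ℝ :=
  (Wᵀ * W)⁻¹ * Wᵀ

open scoped Matrix.Norms.L2Operator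

section Aux

lemma specNorm_eq_l2 {a b : ℕ} (M : Matrix (Fin a) (Fin b) ℝ) : specNorm M = ‖M‖ := rfl

lemma specNorm_nonneg {a b : ℕ} (M : Matrix (Fin a) (Fin b) ℝ) : 0 ≤ specNorm M :=
  norm_nonneg _

lemma specNorm_mul_le {a b c : ℕ} (A : Matrix (Fin a) (Fin b) ℝ) (B : Matrix (Fin b) (Fin c) ℝ) :
    specNorm (A * B) ≤ specNorm A * specNorm B :=
  Matrix.l2_opNorm_mul A B

lemma specNorm_sub_le {a b : ℕ} (A B : Matrix (Fin a) (Fin b) ℝ) :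
    specNorm (A - B) ≤ specNorm A + specNorm B :=
  norm_sub_le A B

lemma isUnit_of_rank_eq {p : ℕ} (M : Matrix (Fin p) (Fin p) ℝ) (h : M.rank = p) : IsUnit M := by
  rw [← Matrix.mulVec_surjective_iff_isUnit]
  have htop : LinearMap.range M.mulVecLin = ⊤ := by
    apply Submodule.eq_top_of_finrank_eq
    rw [Matrix.rank] at h
    simp [h]
  intro y
  obtain ⟨x, hx⟩ := LinearMap.range_eq_top.1 htop y
  exact ⟨x, hx⟩

lemma gram_isUnit {n p : ℕ} (Z : Matrix (Fin n) (Fin p) ℝ) (h : Z.rank = p) :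
    IsUnit (Zᵀ * Z) := isUnit_of_rank_eq _ (by rw [Matrix.rank_transpose_mul_self]; exact h)

lemma proj_mul_self {n p : ℕ} (Z : Matrix (Fin n) (Fin p) ℝ) (hu : IsUnit (Zᵀ * Z)) :
    proj Z * Z = Z := by
  have hd : IsUnit (Zᵀ * Z).det := (Matrix.isUnit_iff_isUnit_det _).mp hu
  calc proj Z * Z = Z * ((Zᵀ * Z)⁻¹ * (Zᵀ * Z)) := by simp [proj, Matrix.mul_assoc]
    _ = Z := by rw [Matrix.nonsing_inv_mul _ hd, Matrix.mul_one]

lemma proj_transpose {n p : ℕ} (Z : Matrix (Fin n) (Fin p) ℝ) : (proj Z)ᵀ = proj Z := by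
  simp [proj, Matrix.transpose_mul, Matrix.transpose_nonsing_inv, Matrix.mul_assoc]

lemma proj_idem {n p : ℕ} (Z : Matrix (Fin n) (Fin p) ℝ) (hu : IsUnit (Zᵀ * Z)) :
    proj Z * proj Z = proj Z := by
  calc proj Z * proj Z = (proj Z * Z) * ((Zᵀ * Z)⁻¹ * Zᵀ) := by simp [proj, Matrix.mul_assoc]
    _ = proj Z := by rw [proj_mul_self Z hu, proj, Matrix.mul_assoc]

lemma specNorm_one_sub_proj_le {n p : ℕ} (Z : Matrix (Fin n) (Fin p) ℝ)
    (hu : IsUnit (Zᵀ * Z)) :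
    specNorm ((1 : Matrix (Fin n) (Fin n) ℝ) - proj Z) ≤ 1 := by
  set P : Matrix (Fin n) (Fin n) ℝ := 1 - proj Z with hP
  have hsym : star P = P := by
    have : Pᵀ = P := by rw [hP, Matrix.transpose_sub, Matrix.transpose_one, proj_transpose]
    rw [show star P = Pᵀ by ext i j; simp [Matrix.star_apply], this]
  have hidem : P * P = P := by
    rw [hP]; rw [sub_mul, one_mul, mul_sub, Matrix.mul_one, proj_idem Z hu]; abel
  have h1 : ‖P‖ * ‖P‖ = ‖P‖ := by
    rw [← CStarRing.norm_star_mul_self (x := P), hsym, hidem]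
  rw [specNorm_eq_l2]
  nlinarith [norm_nonneg P]

noncomputable def matEuc {a b : ℕ} (M : Matrix (Fin a) (Fin b) ℝ) :
    EuclideanSpace ℝ (Fin a × Fin b) :=
  (WithLp.equiv 2 _).symm (fun q => M q.1 q.2)

lemma froNorm_eq {a b : ℕ} (M : Matrix (Fin a) (Fin b) ℝ) : froNorm M = ‖matEuc M‖ := by
  rw [EuclideanSpace.norm_eq, froNorm]
  congr 1
  rw [Fintype.sum_prod_type]
  congr 1; ext i; congr 1; ext j
  simp [matEuc, Real.norm_eq_abs, sq_abs]

lemma froNorm_nonneg {a b : ℕ} (M : Matrix (Fin a) (Fin b) ℝ) : 0 ≤ froNorm M :=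
  Real.sqrt_nonneg _

lemma froNorm_sub_le {a b : ℕ} (A B : Matrix (Fin a) (Fin b) ℝ) :
    froNorm (A - B) ≤ froNorm A + froNorm B := by
  rw [froNorm_eq, froNorm_eq, froNorm_eq]
  have : matEuc (A - B) = matEuc A - matEuc B := rfl
  rw [this]
  exact norm_sub_le _ _

lemma euc_norm_sq {ι : Type*} [Fintype ι] (x : EuclideanSpace ℝ ι) :
    ‖x‖^2 = ∑ i, (x i)^2 := by
  rw [EuclideanSpace.norm_eq, Real.sq_sqrt (by positivity)]
  simp [Real.norm_eq_abs, sq_abs]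

lemma froNorm_mul_le {a b c : ℕ} (A : Matrix (Fin a) (Fin b) ℝ) (B : Matrix (Fin b) (Fin c) ℝ) :
    froNorm (A * B) ≤ specNorm A * froNorm B := by
  have hA : (0:ℝ) ≤ specNorm A := norm_nonneg _
  have key : ∀ j : Fin c, ∑ i, ((A * B) i j)^2 ≤ specNorm A^2 * ∑ k, (B k j)^2 := by
    intro j
    set x : EuclideanSpace ℝ (Fin b) := (WithLp.equiv 2 _).symm (fun k => B k j) with hx
    have h1 : ‖(EuclideanSpace.equiv (Fin a) ℝ).symm (A *ᵥ x)‖ ≤ ‖A‖ * ‖x‖ :=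
      Matrix.l2_opNorm_mulVec A x
    have h2 : ‖(EuclideanSpace.equiv (Fin a) ℝ).symm (A *ᵥ x)‖^2 = ∑ i, ((A * B) i j)^2 := by
      rw [euc_norm_sq]
      rfl
    have h3 : ‖x‖^2 = ∑ k, (B k j)^2 := by rw [euc_norm_sq]; rfl
    have hAnorm : specNorm A = ‖A‖ := rfl
    calc ∑ i, ((A * B) i j)^2 = ‖(EuclideanSpace.equiv (Fin a) ℝ).symm (A *ᵥ x)‖^2 := h2.symm
      _ ≤ (‖A‖ * ‖x‖)^2 := by
          apply sq_le_sq' _ h1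
          have := norm_nonneg ((EuclideanSpace.equiv (Fin a) ℝ).symm (A *ᵥ x))
          nlinarith [norm_nonneg x, norm_nonneg A]
      _ = specNorm A^2 * ∑ k, (B k j)^2 := by rw [mul_pow, h3, hAnorm]
  rw [froNorm, froNorm, Finset.sum_comm]
  have hsum : ∑ j : Fin c, ∑ i, ((A * B) i j)^2 ≤ specNorm A^2 * ∑ j : Fin c, ∑ k, (B k j)^2 := by
    rw [Finset.mul_sum]
    exact Finset.sum_le_sum (fun j _ => key j)
  calc Real.sqrt (∑ j : Fin c, ∑ i, ((A * B) i j)^2)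
      ≤ Real.sqrt (specNorm A^2 * ∑ j : Fin c, ∑ k, (B k j)^2) := Real.sqrt_le_sqrt hsum
    _ = specNorm A * Real.sqrt (∑ j : Fin c, ∑ k, (B k j)^2) := by
        rw [Real.sqrt_mul (sq_nonneg _), Real.sqrt_sq hA]
    _ = specNorm A * Real.sqrt (∑ k : Fin b, ∑ j, (B k j)^2) := by rw [Finset.sum_comm]

end Aux

/-- Projection-perturbation inequality underlying Proposition 2: with `W = Z − Ẑ`,
`‖(I − π(Z))A_k‖ ≤ ‖(I − π(W))A_k‖ + ‖Ẑ‖₂‖W⁺‖₂‖A_k‖` in both spectral and Frobenius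
norms. -/
theorem projection_perturbation {n p m : ℕ}
    (Z Zhat : Matrix (Fin n) (Fin p) ℝ)
    (hZ : Z.rank = p) (hW : (Z - Zhat).rank = p)
    (Ak : Matrix (Fin n) (Fin m) ℝ) :
    specNorm (((1 : Matrix (Fin n) (Fin n) ℝ) - proj Z) * Ak) ≤
        specNorm (((1 : Matrix (Fin n) (Fin n) ℝ) - proj (Z - Zhat)) * Ak) +
          specNorm Zhat * specNorm (pinvCol (Z - Zhat)) * specNorm Ak ∧
      froNorm (((1 : Matrix (Fin n) (Fin n) ℝ) - proj Z) * Ak) ≤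
        froNorm (((1 : Matrix (Fin n) (Fin n) ℝ) - proj (Z - Zhat)) * Ak) +
          specNorm Zhat * specNorm (pinvCol (Z - Zhat)) * froNorm Ak := by
  have huZ : IsUnit (Zᵀ * Z) := gram_isUnit Z hZ
  set W : Matrix (Fin n) (Fin p) ℝ := Z - Zhat with hWdef
  set Q : Matrix (Fin n) (Fin n) ℝ := (1 : Matrix (Fin n) (Fin n) ℝ) - proj Z with hQ
  set X : Matrix (Fin p) (Fin m) ℝ := pinvCol W * Ak with hX
  have hQnorm : specNorm Q ≤ 1 := specNorm_one_sub_proj_le Z huZ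
  have h0 : Q * Z = 0 := by
    rw [hQ, Matrix.sub_mul, Matrix.one_mul, proj_mul_self Z huZ, sub_self]
  -- key algebraic identity
  have hprojW : proj W * Ak = W * X := by
    simp [proj, pinvCol, hX, Matrix.mul_assoc]
  have h1 : Q * (W * X) + Q * (Zhat * X) = 0 := by
    rw [← Matrix.mul_add, ← Matrix.add_mul, hWdef, sub_add_cancel, ← Matrix.mul_assoc, h0,
      Matrix.zero_mul]
  have key : Q * Ak = Q * (((1 : Matrix (Fin n) (Fin n) ℝ) - proj W) * Ak) - Q * (Zhat * X) := by
    have e0 : ((1 : Matrix (Fin n) (Fin n) ℝ) - proj W) * Ak = Ak - W * X := by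
      rw [Matrix.sub_mul, Matrix.one_mul, hprojW]
    have e1 : Q * (((1 : Matrix (Fin n) (Fin n) ℝ) - proj W) * Ak) - Q * (Zhat * X)
        = Q * Ak - (Q * (W * X) + Q * (Zhat * X)) := by
      rw [e0, Matrix.mul_sub]; abel
    rw [e1, h1, sub_zero]
  constructor
  · -- spectral norm
    have step1 : specNorm (Q * Ak) ≤
        specNorm (Q * (((1 : Matrix (Fin n) (Fin n) ℝ) - proj W) * Ak)) +
          specNorm (Q * (Zhat * X)) := by
      rw [key]; exact specNorm_sub_le _ _
    have step2 : specNorm (Q * (((1 : Matrix (Fin n) (Fin n) ℝ) - proj W) * Ak)) ≤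
        specNorm (((1 : Matrix (Fin n) (Fin n) ℝ) - proj W) * Ak) := by
      calc specNorm (Q * (((1 : Matrix (Fin n) (Fin n) ℝ) - proj W) * Ak))
          ≤ specNorm Q * specNorm (((1 : Matrix (Fin n) (Fin n) ℝ) - proj W) * Ak) :=
            specNorm_mul_le _ _
        _ ≤ 1 * specNorm (((1 : Matrix (Fin n) (Fin n) ℝ) - proj W) * Ak) := by
            apply mul_le_mul_of_nonneg_right hQnorm (specNorm_nonneg _)
        _ = _ := one_mul _
    have step3 : specNorm (Q * (Zhat * X)) ≤
        specNorm Zhat * specNorm (pinvCol W) * specNorm Ak := by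
      calc specNorm (Q * (Zhat * X)) ≤ specNorm Q * specNorm (Zhat * X) := specNorm_mul_le _ _
        _ ≤ 1 * specNorm (Zhat * X) := by
            apply mul_le_mul_of_nonneg_right hQnorm (specNorm_nonneg _)
        _ = specNorm (Zhat * X) := one_mul _
        _ ≤ specNorm Zhat * specNorm X := specNorm_mul_le _ _
        _ ≤ specNorm Zhat * (specNorm (pinvCol W) * specNorm Ak) := by
            apply mul_le_mul_of_nonneg_left (specNorm_mul_le _ _) (specNorm_nonneg _)
        _ = specNorm Zhat * specNorm (pinvCol W) * specNorm Ak := by ring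
    linarith
  · -- Frobenius norm
    have step1 : froNorm (Q * Ak) ≤
        froNorm (Q * (((1 : Matrix (Fin n) (Fin n) ℝ) - proj W) * Ak)) +
          froNorm (Q * (Zhat * X)) := by
      rw [key]; exact froNorm_sub_le _ _
    have step2 : froNorm (Q * (((1 : Matrix (Fin n) (Fin n) ℝ) - proj W) * Ak)) ≤
        froNorm (((1 : Matrix (Fin n) (Fin n) ℝ) - proj W) * Ak) := by
      calc froNorm (Q * (((1 : Matrix (Fin n) (Fin n) ℝ) - proj W) * Ak))
          ≤ specNorm Q * froNorm (((1 : Matrix (Fin n) (Fin n) ℝ) - proj W) * Ak) :=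
            froNorm_mul_le _ _
        _ ≤ 1 * froNorm (((1 : Matrix (Fin n) (Fin n) ℝ) - proj W) * Ak) := by
            apply mul_le_mul_of_nonneg_right hQnorm (froNorm_nonneg _)
        _ = _ := one_mul _
    have step3 : froNorm (Q * (Zhat * X)) ≤
        specNorm Zhat * specNorm (pinvCol W) * froNorm Ak := by
      calc froNorm (Q * (Zhat * X)) ≤ specNorm Q * froNorm (Zhat * X) := froNorm_mul_le _ _
        _ ≤ 1 * froNorm (Zhat * X) := by
            apply mul_le_mul_of_nonneg_right hQnorm (froNorm_nonneg _)
        _ = froNorm (Zhat * X) := one_mul _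
        _ ≤ specNorm Zhat * froNorm X := froNorm_mul_le _ _
        _ ≤ specNorm Zhat * (specNorm (pinvCol W) * froNorm Ak) := by
            apply mul_le_mul_of_nonneg_left (froNorm_mul_le _ _) (specNorm_nonneg _)
        _ = specNorm Zhat * specNorm (pinvCol W) * froNorm Ak := by ring
    linarith
end
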